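/- Let f(x) = x^8 * h(x + 4/x) where h = x^8 + 19x^7 + 152x^6 + 664x^5 + 1712x^4 + 2608x^3 + 2176x^2 + 768x, with complex roots π_1,...,π_16, and R_n(f) = 4^n + 1 - Σ π_i^n. Then P_7(f) := (R_7(f) - R_1(f))/7 = 2496, and 2496 ≡ 0 (mod 3). -/

import Mathlib

open Polynomial BigOperators

/-- The real Weil polynomial `h = x^8 + 19x^7 + 152x^6 + 664x^5 + 1712x^4 + 2608x^3
+ 2176x^2 + 768x`, over `ℂ`. -/
noncomputable def hRWP : Polynomial ℂ :=
  X ^ 8 + 19 * X ^ 7 + 152 * X ^ 6 + 664 * X ^ 5 + 1712 * X ^ 4 + 2608 * X ^ 3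
    + 2176 * X ^ 2 + 768 * X

/-- `R n = 4^n + 1 - ∑ πᵢⁿ`. -/
noncomputable def Rn (π : Fin 16 → ℂ) (n : ℕ) : ℂ :=
  4 ^ n + 1 - ∑ i : Fin 16, π i ^ n

/-- The expansion of `x^8 * hRWP (x + 4/x)` as a polynomial. -/
noncomputable def FF : Polynomial ℂ :=
  X^16 + C 19 * X^15 + C 184 * X^14 + C 1196 * X^13 + C 5808 * X^12 + C 22272 * X^11
  + C 69632 * X^10 + C 180864 * X^9 + C 394240 * X^8 + C 723456 * X^7 + C 1114112 * X^6
  + C 1425408 * X^5 + C 1486848 * X^4 + C 1224704 * X^3 + C 753664 * X^2 + C 311296 * X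
  + C 65536

lemma FF_eval (x : ℂ) (hx : x ≠ 0) : FF.eval x = x ^ 8 * hRWP.eval (x + 4 / x) := by
  have hxx : (x + 4/x) * x = x^2 + 4 := by field_simp
  have h1 : x ^ 8 * hRWP.eval (x + 4 / x)
      = ((x+4/x)*x)^8 + 19*((x+4/x)*x)^7*x + 152*((x+4/x)*x)^6*x^2 + 664*((x+4/x)*x)^5*x^3
        + 1712*((x+4/x)*x)^4*x^4 + 2608*((x+4/x)*x)^3*x^5 + 2176*((x+4/x)*x)^2*x^6
        + 768*((x+4/x)*x)*x^7 := by
    simp only [hRWP, eval_add, eval_mul, eval_pow, eval_X, eval_ofNat]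
    ring
  rw [h1, hxx]
  simp only [FF, eval_add, eval_mul, eval_pow, eval_X, eval_C]
  ring

lemma newton (π : Fin 16 → ℂ) (k : ℕ) (h : 0 < k) :
    (∑ i : Fin 16, π i ^ k) = (-1)^(k+1) * k * (Multiset.map π Finset.univ.val).esymm k
      - ∑ a ∈ (Finset.HasAntidiagonal.antidiagonal k).filter (fun a => a.1 ∈ Set.Ioo 0 k),
          (-1)^a.1 * (Multiset.map π Finset.univ.val).esymm a.1 * ∑ i : Fin 16, π i ^ a.2 := by
  have := congrArg (MvPolynomial.aeval π) (MvPolynomial.psum_eq_mul_esymm_sub_sum (Fin 16) ℂ k h)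
  simpa [MvPolynomial.psum, MvPolynomial.aeval_esymm_eq_multiset_esymm, map_sum, map_sub,
    map_mul, map_pow] using this

theorem degree_seven_place_count (f : Polynomial ℂ) (π : Fin 16 → ℂ)
    (hroots : f = ∏ i : Fin 16, (X - C (π i)))
    (hWeil : ∀ x : ℂ, x ≠ 0 → f.eval x = x ^ 8 * hRWP.eval (x + 4 / x)) :
    (Rn π 7 - Rn π 1) / 7 = 2496 ∧ (2496 : ℤ) % 3 = 0 := by
  refine ⟨?_, by decide⟩
  -- f equals the explicit polynomial FF
  have hf : f = FF := by
    apply Polynomial.eq_of_infinite_eval_eq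
    apply Set.Infinite.mono (s := {(0:ℂ)}ᶜ) ?_ ((Set.finite_singleton (0:ℂ)).infinite_compl)
    intro x hx
    have hx0 : x ≠ 0 := hx
    simp only [Set.mem_setOf_eq]
    rw [hWeil x hx0, FF_eval x hx0]
  set M : Multiset ℂ := Multiset.map π Finset.univ.val with hM
  have hcard : Multiset.card M = 16 := by simp [hM]
  have hFprod : FF = (M.map (fun t => X - C t)).prod := by
    rw [← hf, hroots]
    simp [hM, Finset.prod_eq_multiset_prod, Multiset.map_map, Function.comp]
  have he : ∀ k, k ≤ 16 → M.esymm k = (-1)^k * FF.coeff (16-k) := by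
    intro k hk
    have hle : 16 - k ≤ Multiset.card M := by rw [hcard]; omega
    have h := Multiset.prod_X_sub_C_coeff M hle
    rw [← hFprod, hcard, Nat.sub_sub_self hk] at h
    rw [h, ← mul_assoc, ← mul_pow]
    norm_num
  have e1 : M.esymm 1 = -19 := by
    rw [he 1 (by norm_num)]; norm_num [FF, coeff_X_pow, coeff_C]
  have e2 : M.esymm 2 = 184 := by
    rw [he 2 (by norm_num)]; norm_num [FF, coeff_X_pow, coeff_C]
  have e3 : M.esymm 3 = -1196 := by
    rw [he 3 (by norm_num)]; norm_num [FF, coeff_X_pow, coeff_C]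
  have e4 : M.esymm 4 = 5808 := by
    rw [he 4 (by norm_num)]; norm_num [FF, coeff_X_pow, coeff_C]
  have e5 : M.esymm 5 = -22272 := by
    rw [he 5 (by norm_num)]; norm_num [FF, coeff_X_pow, coeff_C]
  have e6 : M.esymm 6 = 69632 := by
    rw [he 6 (by norm_num)]; norm_num [FF, coeff_X_pow, coeff_C]
  have e7 : M.esymm 7 = -180864 := by
    rw [he 7 (by norm_num)]; norm_num [FF, coeff_X_pow, coeff_C]
  -- power sums via Newton's identities
  have hn : ∀ k : ℕ, 0 < k → (∑ i : Fin 16, π i ^ k)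
      = (-1)^(k+1) * k * M.esymm k
      - ∑ j ∈ Finset.range (k+1), (if j ∈ Set.Ioo 0 k then
          (-1)^j * M.esymm j * ∑ i : Fin 16, π i ^ (k - j) else 0) := by
    intro k hk
    rw [newton π k hk, Finset.sum_filter, Finset.Nat.sum_antidiagonal_eq_sum_range_succ_mk]
  have p1 : (∑ i : Fin 16, π i ^ 1) = -19 := by
    have h := hn 1 one_pos
    simp only [Finset.sum_range_succ, Finset.sum_range_zero, Set.mem_Ioo] at h
    rw [h, e1]; norm_num
  have p1' : (∑ i : Fin 16, π i) = -19 := by simpa using p1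
  have p2 : (∑ i : Fin 16, π i ^ 2) = -7 := by
    have h := hn 2 (by norm_num)
    simp only [Finset.sum_range_succ, Finset.sum_range_zero, Set.mem_Ioo] at h
    norm_num [e1, e2, p1, p1'] at h
    try rw [h]
    try norm_num
    try exact h
  have p3 : (∑ i : Fin 16, π i ^ 3) = 41 := by
    have h := hn 3 (by norm_num)
    simp only [Finset.sum_range_succ, Finset.sum_range_zero, Set.mem_Ioo] at h
    norm_num [e1, e2, e3, p1, p1', p2] at h
    try rw [h]
    try norm_num
    try exact h
  have p4 : (∑ i : Fin 16, π i ^ 4) = 1 := by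
    have h := hn 4 (by norm_num)
    simp only [Finset.sum_range_succ, Finset.sum_range_zero, Set.mem_Ioo] at h
    norm_num [e1, e2, e3, e4, p1, p1', p2, p3] at h
    try rw [h]
    try norm_num
    try exact h
  have p5 : (∑ i : Fin 16, π i ^ 5) = -199 := by
    have h := hn 5 (by norm_num)
    simp only [Finset.sum_range_succ, Finset.sum_range_zero, Set.mem_Ioo] at h
    norm_num [e1, e2, e3, e4, e5, p1, p1', p2, p3, p4] at h
    try rw [h]
    try norm_num
    try exact h
  have p6 : (∑ i : Fin 16, π i ^ 6) = 593 := by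
    have h := hn 6 (by norm_num)
    simp only [Finset.sum_range_succ, Finset.sum_range_zero, Set.mem_Ioo] at h
    norm_num [e1, e2, e3, e4, e5, e6, p1, p1', p2, p3, p4, p5] at h
    try rw [h]
    try norm_num
    try exact h
  have p7 : (∑ i : Fin 16, π i ^ 7) = -1111 := by
    have h := hn 7 (by norm_num)
    simp only [Finset.sum_range_succ, Finset.sum_range_zero, Set.mem_Ioo] at h
    norm_num [e1, e2, e3, e4, e5, e6, e7, p1, p1', p2, p3, p4, p5, p6] at h
    try rw [h]
    try norm_num
    try exact h
  rw [Rn, Rn, p1, p7]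
  norm_num
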